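/- The first-contracted Einstein–Lovelock tensor is trace-adjusted correctly: for T_{2k} = h_{2k}·g − (1/(2k−1)!)·c^{2k−1}R^k on an n-dimensional space, the full trace satisfies c(T_{2k}) = (n−2k)·h_{2k}. -/

import Mathlib

open scoped BigOperators RealInnerProductSpace

/-- A `(p,q)`-double form on `V` (function version). -/
abbrev DForm (V : Type*) (p q : ℕ) : Type _ := (Fin p → V) → (Fin q → V) → ℝ

/-- Wedge product of (alternating) `p`-forms, determinant convention. -/
noncomputable def wedgeF {V : Type*} {p q : ℕ} (α : (Fin p → V) → ℝ) (β : (Fin q → V) → ℝ) :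
    (Fin (p + q) → V) → ℝ := fun x =>
  (1 / (p.factorial * q.factorial : ℝ)) *
    ∑ σ : Equiv.Perm (Fin (p + q)),
      ((Equiv.Perm.sign σ : ℤ) : ℝ) *
        (α fun i => x (σ (Fin.castAdd q i))) * (β fun j => x (σ (Fin.natAdd p j)))

/-- Exterior (Kulkarni–Nomizu type) product of double forms. -/
noncomputable def dmul {V : Type*} {p q r s : ℕ} (ω : DForm V p q) (η : DForm V r s) :
    DForm V (p + r) (q + s) := fun x y =>
  (1 / (p.factorial * r.factorial * q.factorial * s.factorial : ℝ)) *
    ∑ σ : Equiv.Perm (Fin (p + r)), ∑ τ : Equiv.Perm (Fin (q + s)),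
      ((Equiv.Perm.sign σ : ℤ) : ℝ) * ((Equiv.Perm.sign τ : ℤ) : ℝ) *
        ω (fun i => x (σ (Fin.castAdd r i))) (fun j => y (τ (Fin.castAdd s j))) *
        η (fun i => x (σ (Fin.natAdd p i))) (fun j => y (τ (Fin.natAdd q j)))

/-- Reindexing a double form along equalities of the bidegree. -/
def castD {V : Type*} {p q p' q' : ℕ} (hp : p = p') (hq : q = q') (ω : DForm V p q) :
    DForm V p' q' := fun x y => ω (fun i => x (Fin.cast hp i)) (fun j => y (Fin.cast hq j))

/-- Tensor product of two forms, as a double form. -/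
def tmulD {V : Type*} {p q : ℕ} (α : (Fin p → V) → ℝ) (β : (Fin q → V) → ℝ) : DForm V p q :=
  fun x y => α x * β y

/-- Powers of a double form for the exterior product. -/
noncomputable def dpow {V : Type*} {a b : ℕ} (ω : DForm V a b) : (k : ℕ) → DForm V (a * k) (b * k)
  | 0 => fun _ _ => 1
  | k + 1 => dmul (dpow ω k) ω

/-- The metric, as a `(1,1)`-double form. -/
noncomputable def gmetric {V : Type*} [NormedAddCommGroup V] [InnerProductSpace ℝ V] :
    DForm V 1 1 := fun x y => (inner ℝ (x 0) (y 0) : ℝ)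

/-- A symmetric bilinear form as a `(1,1)`-double form. -/
def bilinD {V : Type*} [AddCommGroup V] [Module ℝ V] (B : V →ₗ[ℝ] V →ₗ[ℝ] ℝ) : DForm V 1 1 :=
  fun x y => B (x 0) (y 0)

/-- The scalar given by a `(0,0)`-double form. -/
def toScalar {V : Type*} (ω : DForm V 0 0) : ℝ := ω Fin.elim0 Fin.elim0

/-- Ricci contraction of a double form with respect to an orthonormal basis. -/
noncomputable def cD {V : Type*} [NormedAddCommGroup V] [InnerProductSpace ℝ V] {n : ℕ}
    (b : OrthonormalBasis (Fin n) ℝ V) {p q : ℕ} (ω : DForm V (p + 1) (q + 1)) : DForm V p q :=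
  fun x y => ∑ i : Fin n, ω (Fin.cons (b i) x) (Fin.cons (b i) y)

/-- Iterated Ricci contraction. -/
noncomputable def cIter {V : Type*} [NormedAddCommGroup V] [InnerProductSpace ℝ V] {n : ℕ}
    (b : OrthonormalBasis (Fin n) ℝ V) :
    ∀ (m : ℕ) {p q : ℕ}, DForm V (p + m) (q + m) → DForm V p q
  | 0, _, _, ω => ω
  | m + 1, _, _, ω => cIter b m (cD b ω)

/-- Symmetry of a `(p,p)`-double form. -/
def IsSymmD {V : Type*} {p : ℕ} (ω : DForm V p p) : Prop := ∀ x y, ω x y = ω y x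

/-- A double form is alternating in each group of arguments. -/
def IsAltD {V : Type*} {p q : ℕ} (ω : DForm V p q) : Prop :=
  (∀ (σ : Equiv.Perm (Fin p)) (x : Fin p → V) (y : Fin q → V),
      ω (x ∘ σ) y = ((Equiv.Perm.sign σ : ℤ) : ℝ) * ω x y) ∧
  (∀ (τ : Equiv.Perm (Fin q)) (x : Fin p → V) (y : Fin q → V),
      ω x (y ∘ τ) = ((Equiv.Perm.sign τ : ℤ) : ℝ) * ω x y)

/-- A double form is multilinear in each argument. -/
def IsMultilinearD {V : Type*} [AddCommGroup V] [Module ℝ V] {p q : ℕ}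
    (ω : DForm V p q) : Prop :=
  (∀ (x : Fin p → V) (i : Fin p) (u v : V) (c : ℝ) (y : Fin q → V),
      ω (Function.update x i (u + c • v)) y
        = ω (Function.update x i u) y + c * ω (Function.update x i v) y) ∧
  (∀ (x : Fin p → V) (y : Fin q → V) (j : Fin q) (u v : V) (c : ℝ),
      ω x (Function.update y j (u + c • v))
        = ω x (Function.update y j u) + c * ω x (Function.update y j v))

/-- The first Bianchi identity for a `(p,q)`-double form. -/
def FirstBianchiD {V : Type*} {p q : ℕ} (ω : DForm V p q) : Prop :=
  ∀ (x : Fin (p + 1) → V) (y : Fin q → V),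
    ∑ i : Fin (p + 1), ((-1 : ℝ) ^ (i : ℕ)) * ω (i.removeNth x) y = 0

/-- The volume form associated to an (oriented) orthonormal basis, extended by `0`
to tuples of the wrong length. -/
noncomputable def volA {V : Type*} [NormedAddCommGroup V] [InnerProductSpace ℝ V] {n : ℕ}
    (b : OrthonormalBasis (Fin n) ℝ V) {m : ℕ} (v : Fin m → V) : ℝ :=
  if h : m = n then
    Matrix.det (Matrix.of fun i j : Fin n => (inner ℝ (b i) (v (Fin.cast h.symm j)) : ℝ)) else 0

/-- Generalized Hodge star operator on double forms. -/
noncomputable def starD {V : Type*} [NormedAddCommGroup V] [InnerProductSpace ℝ V] {n : ℕ}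
    (b : OrthonormalBasis (Fin n) ℝ V) {p q : ℕ} (ω : DForm V p q) :
    DForm V (n - p) (n - q) := fun x y =>
  (1 / (p.factorial * q.factorial : ℝ)) *
    ∑ i : Fin p → Fin n, ∑ j : Fin q → Fin n,
      ω (fun a => b (i a)) (fun a => b (j a)) *
        volA b (Fin.append (fun a => b (i a)) x) * volA b (Fin.append (fun a => b (j a)) y)

/-- The scalar `⋆ω` of an `(n,n)`-double form. -/
noncomputable def starScalar {V : Type*} [NormedAddCommGroup V] [InnerProductSpace ℝ V] {n : ℕ}
    (b : OrthonormalBasis (Fin n) ℝ V) (ω : DForm V n n) : ℝ :=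
  toScalar (castD (Nat.sub_self n) (Nat.sub_self n) (starD b ω))



lemma consMkZero {α : Type*} {m : ℕ} (x : α) (f : Fin m → α) (h : 0 < m + 1) :
    (Fin.cons x f : Fin (m + 1) → α) ⟨0, h⟩ = x := by
  rw [show (⟨0, h⟩ : Fin (m + 1)) = 0 from Fin.ext (by simp), Fin.cons_zero]

lemma consMkSucc {α : Type*} {m : ℕ} (x : α) (f : Fin m → α) (v : ℕ)
    (h : v + 1 < m + 1) : (Fin.cons x f : Fin (m + 1) → α) ⟨v + 1, h⟩ = f ⟨v, by omega⟩ := by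
  rw [show (⟨v + 1, h⟩ : Fin (m + 1)) = Fin.succ ⟨v, by omega⟩ from Fin.ext (by simp),
    Fin.cons_succ]

lemma cons_elim0 {α : Type*} (x : α) (i : Fin (0 + 1)) :
    (Fin.cons x Fin.elim0 : Fin (0 + 1) → α) i = x := by
  obtain ⟨v, hv⟩ := i
  match v with
  | 0 => exact consMkZero _ _ hv
  | v + 1 => exact absurd hv (by omega)

/-- Prepend a tuple `f` before `x`. -/
def preD {V : Type*} {p m : ℕ} (f : Fin m → V) (x : Fin p → V) : Fin (p + m) → V :=
  fun i => if h : (i : ℕ) < m then f ⟨i, h⟩ else x ⟨(i : ℕ) - m, by have := i.isLt; omega⟩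

lemma cIter_eq_sum {V : Type*} [NormedAddCommGroup V] [InnerProductSpace ℝ V] {n : ℕ}
    (b : OrthonormalBasis (Fin n) ℝ V) :
    ∀ (m : ℕ) {p q : ℕ} (ω : DForm V (p + m) (q + m)) (x : Fin p → V) (y : Fin q → V),
      cIter b m ω x y = ∑ f : Fin m → Fin n, ω (preD (b ∘ f) x) (preD (b ∘ f) y) := by
  intro m
  induction m with
  | zero =>
    intro p q ω x y
    have hpre : ∀ (r : ℕ) (z : Fin r → V) (f : Fin 0 → Fin n), preD (b ∘ f) z = z := by
      intro r z f
      funext i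
      simp only [preD]
      rw [dif_neg (by omega)]
      exact congrArg z (Fin.ext (by simp))
    rw [Fintype.sum_unique, hpre, hpre]
    rfl
  | succ m ih =>
    intro p q ω x y
    have hcons : ∀ {r : ℕ} (z : Fin r → V) (i : Fin n) (f : Fin m → Fin n),
        (Fin.cons (b i) (preD (b ∘ f) z) : Fin (r + (m + 1)) → V)
          = preD (b ∘ Fin.cons i f) z := by
      intro r z i f
      funext a
      obtain ⟨av, ha⟩ := a
      match av with
      | 0 =>
        rw [consMkZero _ _ ha]
        simp only [preD]
        rw [dif_pos (by omega)]
        simp only [Function.comp_apply]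
        rw [consMkZero _ _ (by omega)]
      | v + 1 =>
        rw [consMkSucc _ _ _ ha]
        simp only [preD]
        by_cases hvm : v < m
        · rw [dif_pos (by omega : v + 1 < m + 1), dif_pos hvm]
          simp only [Function.comp_apply]
          rw [consMkSucc _ _ _ (by omega)]
        · rw [dif_neg (by omega : ¬ v + 1 < m + 1), dif_neg hvm]
          exact congrArg z (Fin.ext (by simp)).symm
    have h1 : cIter b (m + 1) ω x y = cIter b m (cD b ω) x y := rfl
    rw [h1, ih]
    have hre := Fintype.sum_equiv (Fin.consEquiv (fun _ : Fin (m + 1) => Fin n))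
      (fun pr : Fin n × (Fin m → Fin n) =>
        ω (preD (b ∘ Fin.cons pr.1 pr.2) x) (preD (b ∘ Fin.cons pr.1 pr.2) y))
      (fun g : Fin (m + 1) → Fin n => ω (preD (b ∘ g) x) (preD (b ∘ g) y))
      (fun pr => rfl)
    rw [← hre, Fintype.sum_prod_type]
    unfold cD
    refine Finset.sum_comm.trans ?_
    refine Finset.sum_congr rfl fun i _ => Finset.sum_congr rfl fun f _ => ?_
    rw [hcons, hcons]

/-- the Einstein–Lovelock tensor
`T_{2k} = h_{2k}·g − (1/(2k−1)!)·c^{2k−1}R^k` has full trace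
`c(T_{2k}) = (n−2k)·h_{2k}`, where `h_{2k} = (1/(2k)!)·c^{2k}R^k`. -/
theorem gaussBonnet_stmt13 {V : Type*} [NormedAddCommGroup V] [InnerProductSpace ℝ V]
    {n k : ℕ} (hk : 1 ≤ k) (hkn : 2 * k ≤ n) (b : OrthonormalBasis (Fin n) ℝ V)
    (R : DForm V 2 2) (hsym : IsSymmD R) (halt : IsAltD R) (hml : IsMultilinearD R)
    (hbianchi : FirstBianchiD R)
    (h2k : ℝ)
    (hh : h2k = (1 / ((2 * k).factorial : ℝ)) *
        toScalar (cIter b (2 * k) (castD (by omega) (by omega) (dpow R k))))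
    (T2k : DForm V 1 1)
    (hT : T2k = h2k • gmetric
        - (1 / ((2 * k - 1).factorial : ℝ)) •
            cIter b (2 * k - 1) (castD (by omega) (by omega) (dpow R k))) :
    toScalar (cD b (castD (by omega) (by omega) T2k)) = ((n : ℝ) - 2 * k) * h2k := by
  classical
  set c1 : ℝ := 1 / ((2 * k - 1).factorial : ℝ) with hc1
  set c2 : ℝ := 1 / ((2 * k).factorial : ℝ) with hc2
  set D := dpow R k with hD
  have e1 : 2 * k = 1 + (2 * k - 1) := by omega
  have e0 : 2 * k = 0 + (2 * k) := by omega
  have hgoal : toScalar (cD b (castD (by omega) (by omega) T2k))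
      = ∑ j : Fin n, T2k (fun _ => b j) (fun _ => b j) := by
    unfold toScalar cD castD
    refine Finset.sum_congr rfl fun j _ => ?_
    congr 1 <;> · funext a; exact cons_elim0 _ _
  rw [hgoal]
  have hA : ∀ j : Fin n, T2k (fun _ => b j) (fun _ => b j)
      = h2k * (inner ℝ (b j) (b j) : ℝ)
        - c1 * (cIter b (2 * k - 1) (castD e1 e1 D)) (fun _ => b j) (fun _ => b j) := by
    intro j
    rw [hT]
    rfl
  simp only [hA]
  have hbj : ∀ j : Fin n, (inner ℝ (b j) (b j) : ℝ) = 1 := by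
    intro j
    have := orthonormal_iff_ite.mp b.orthonormal j j
    simpa using this
  simp only [hbj, mul_one]
  rw [Finset.sum_sub_distrib, Finset.sum_const, Finset.card_univ, Fintype.card_fin,
    nsmul_eq_mul, ← Finset.mul_sum]
  have hkey1 : ∀ j : Fin n,
      (cIter b (2 * k - 1) (castD e1 e1 D)) (fun _ => b j) (fun _ => b j)
      = ∑ f : Fin (2 * k - 1) → Fin n,
          (castD e1 e1 D) (preD (b ∘ f) (fun _ => b j)) (preD (b ∘ f) (fun _ => b j)) :=
    fun j => cIter_eq_sum b (2 * k - 1) _ _ _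
  have hkey2 : toScalar (cIter b (2 * k) (castD e0 e0 D))
      = ∑ g : Fin (2 * k) → Fin n,
          (castD e0 e0 D) (preD (b ∘ g) Fin.elim0) (preD (b ∘ g) Fin.elim0) :=
    cIter_eq_sum b (2 * k) _ _ _
  let φ : (Fin (2 * k - 1) → Fin n) × Fin n → (Fin (2 * k) → Fin n) :=
    fun pr i => if h : (i : ℕ) < 2 * k - 1 then pr.1 ⟨i, h⟩ else pr.2
  have htuple : ∀ (f : Fin (2 * k - 1) → Fin n) (j : Fin n),
      (castD e1 e1 D) (preD (b ∘ f) (fun _ => b j)) (preD (b ∘ f) (fun _ => b j))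
      = (castD e0 e0 D) (preD (b ∘ φ (f, j)) Fin.elim0) (preD (b ∘ φ (f, j)) Fin.elim0) := by
    intro f j
    unfold castD
    have ht : (fun i => preD (b ∘ f) (fun _ => b j) (Fin.cast e1 i))
        = fun i => preD (b ∘ φ (f, j)) Fin.elim0 (Fin.cast e0 i) := by
      funext i
      simp only [preD, φ, Function.comp_apply, Fin.coe_cast]
      by_cases h : (i : ℕ) < 2 * k - 1
      · rw [dif_pos h, dif_pos (by have := i.isLt; omega), dif_pos h]
      · rw [dif_neg h, dif_pos (by have := i.isLt; omega), dif_neg h]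
    rw [ht]
  have hbij : Function.Bijective φ := by
    constructor
    · rintro ⟨f, j⟩ ⟨f', j'⟩ hpp
      have h2 : φ (f, j) ⟨2 * k - 1, by omega⟩ = φ (f', j') ⟨2 * k - 1, by omega⟩ := by
        rw [hpp]
      simp only [φ, dif_neg (lt_irrefl _)] at h2
      refine Prod.ext ?_ h2
      funext a
      have := congrFun hpp ⟨(a : ℕ), by have := a.isLt; omega⟩
      simpa [φ, dif_pos a.isLt] using this
    · intro g
      refine ⟨(fun a => g ⟨(a : ℕ), by have := a.isLt; omega⟩, g ⟨2 * k - 1, by omega⟩), ?_⟩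
      funext i
      simp only [φ]
      by_cases h : (i : ℕ) < 2 * k - 1
      · rw [dif_pos h]
      · rw [dif_neg h]
        exact congrArg g (Fin.ext (by have := i.isLt; simp; omega))
  have hsum : ∑ j : Fin n, ∑ f : Fin (2 * k - 1) → Fin n,
        (castD e1 e1 D) (preD (b ∘ f) (fun _ => b j)) (preD (b ∘ f) (fun _ => b j))
      = ∑ g : Fin (2 * k) → Fin n,
          (castD e0 e0 D) (preD (b ∘ g) Fin.elim0) (preD (b ∘ g) Fin.elim0) := by
    rw [Finset.sum_comm]
    have h1 := Fintype.sum_bijective φ hbij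
      (fun pr : (Fin (2 * k - 1) → Fin n) × Fin n =>
        (castD e1 e1 D) (preD (b ∘ pr.1) (fun _ => b pr.2)) (preD (b ∘ pr.1) (fun _ => b pr.2)))
      (fun g => (castD e0 e0 D) (preD (b ∘ g) Fin.elim0) (preD (b ∘ g) Fin.elim0))
      (fun pr => htuple pr.1 pr.2)
    rw [← h1, Fintype.sum_prod_type]
  simp only [hkey1]
  rw [hsum, ← hkey2]
  have hhe : h2k = c2 * toScalar (cIter b (2 * k) (castD e0 e0 D)) := hh
  rw [hhe]
  have hfac : ((2 * k).factorial : ℝ) = ((2 * k : ℕ) : ℝ) * ((2 * k - 1).factorial : ℝ) := by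
    rw [← Nat.cast_mul]
    exact_mod_cast congrArg (Nat.cast (R := ℝ)) (Nat.mul_factorial_pred (by omega)).symm
  have hf1 : ((2 * k - 1).factorial : ℝ) ≠ 0 := Nat.cast_ne_zero.mpr (Nat.factorial_ne_zero _)
  have hc12 : c1 = ((2 * k : ℕ) : ℝ) * c2 := by
    rw [hc1, hc2, hfac]
    have hf2 : ((2 * k : ℕ) : ℝ) ≠ 0 := by positivity
    field_simp
  rw [hc12]
  push_cast
  ring
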